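/- There is an instance of the pricing game with costs and a submodular buyer valuation whose Price of Anarchy is unbounded: for odd k ≫ ℓ, with sellers 0,…,ℓ having cost k−ℓ and sellers ℓ+1,…,ℓ+k having cost 0, and v(S) = min{kℓ, Σ_{i∈S} w_i} with w_i = k for i ≤ ℓ and w_i = ℓ otherwise, the price vector p_i = k−ℓ (i ≤ ℓ), p_i = ℓ (i > ℓ) with lexicographic tie-breaking is a pure Nash equilibrium of welfare ℓ², while the optimal welfare is ℓ·k. -/

import Mathlib

lemma fincard_lt (n m : ℕ) (h : m ≤ n) :
    (Finset.univ.filter fun j : Fin n => (j:ℕ) < m).card = m := by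
  rw [← Finset.card_range m]
  apply Finset.card_bij (fun (j : Fin n) _ => (j:ℕ))
  · intro a ha; simp only [Finset.mem_filter] at ha; simpa using ha.2
  · intro a _ b _ hab; exact Fin.val_injective hab
  · intro b hb
    simp only [Finset.mem_range] at hb
    exact ⟨⟨b, lt_of_lt_of_le hb h⟩, by simp [hb], rfl⟩

lemma sum_ite_split {n : ℕ} (T : Finset (Fin n)) (ℓ : ℕ) (a b : ℝ) :
    ∑ i ∈ T, (if (i:ℕ) ≤ ℓ then a else b) =
      (T.filter fun i : Fin n => (i:ℕ) ≤ ℓ).card * a +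
      (T.filter fun i : Fin n => ¬ (i:ℕ) ≤ ℓ).card * b := by
  rw [Finset.sum_ite, Finset.sum_const, Finset.sum_const]
  simp only [nsmul_eq_mul]

lemma core1 (ℓ k m t : ℕ) (hk : ℓ < k) :
    min ((k:ℝ)*ℓ) (m*k + t*ℓ) ≤ (ℓ:ℝ)^2 + m*((k:ℝ)-ℓ) + t*ℓ := by
  rcases le_or_gt m ℓ with h | h
  · refine le_trans (min_le_right _ _) ?_
    have hm : (m:ℝ) ≤ ℓ := by exact_mod_cast h
    have h0 : (0:ℝ) ≤ ℓ := by positivity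
    nlinarith
  · refine le_trans (min_le_left _ _) ?_
    have hm : (ℓ:ℝ) ≤ m := by exact_mod_cast h.le
    have hkl : (ℓ:ℝ) < k := by exact_mod_cast hk
    have h0 : (0:ℝ) ≤ t := by positivity
    have h1 : (0:ℝ) ≤ ℓ := by positivity
    nlinarith

lemma core2 (ℓ k m t : ℕ) (hk : ℓ < k) (ht : 1 ≤ t) :
    min ((k:ℝ)*ℓ) (m*k + t*ℓ) ≤ ((ℓ:ℝ)^2 - ℓ) + m*((k:ℝ)-ℓ) + t*ℓ := by
  have h1 : (0:ℝ) ≤ ℓ := by positivity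
  have ht' : (1:ℝ) ≤ t := by exact_mod_cast ht
  rcases lt_or_ge m ℓ with h | h
  · refine le_trans (min_le_right _ _) ?_
    have hm : (m:ℝ) + 1 ≤ ℓ := by exact_mod_cast h
    nlinarith
  · refine le_trans (min_le_left _ _) ?_
    have hm : (ℓ:ℝ) ≤ m := by exact_mod_cast h
    have hkl : (ℓ:ℝ) < k := by exact_mod_cast hk
    nlinarith
/-- Unbounded Price of Anarchy with costs and a submodular
valuation: sellers `0,…,ℓ` have cost `k-ℓ` and weight `k`, sellers
`ℓ+1,…,ℓ+k` have cost `0` and weight `ℓ`, and `v S = min (kℓ) (∑_{i∈S} w i)`.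
The price vector `p` with `p_i = k-ℓ` for heavy sellers and `p_i = ℓ` for light
sellers, together with lexicographic tie-breaking (which selects
`{0,…,ℓ-1}`), is a pure Nash equilibrium of welfare `ℓ²`, while the optimal
welfare is `ℓ·k`. -/
theorem stmt15 (ℓ k : ℕ) (hℓ : 1 ≤ ℓ) (hk : ℓ < k) (hodd : Odd k)
    (w c p : Fin (ℓ + k + 1) → ℝ)
    (hw : ∀ i, w i = if (i : ℕ) ≤ ℓ then (k : ℝ) else (ℓ : ℝ))
    (hcost : ∀ i, c i = if (i : ℕ) ≤ ℓ then (k : ℝ) - ℓ else 0)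
    (hprice : ∀ i, p i = if (i : ℕ) ≤ ℓ then (k : ℝ) - ℓ else (ℓ : ℝ))
    (v : Finset (Fin (ℓ + k + 1)) → ℝ)
    (hv : ∀ S, v S = min ((k : ℝ) * ℓ) (∑ i ∈ S, w i))
    (X : (Fin (ℓ + k + 1) → ℝ) → Finset (Fin (ℓ + k + 1)))
    (hXd : ∀ q : Fin (ℓ + k + 1) → ℝ, (∀ i, 0 ≤ q i) → ∀ T,
      v T - ∑ i ∈ T, q i ≤ v (X q) - ∑ i ∈ X q, q i)
    -- lexicographic tie-breaking selects the first `ℓ` (heavy) sellers: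
    (hXp : X p = Finset.univ.filter (fun i : Fin (ℓ + k + 1) => (i : ℕ) < ℓ)) :
    (∀ i : Fin (ℓ + k + 1), ∀ q : ℝ, 0 ≤ q →
      (if i ∈ X (Function.update p i q) then q - c i else 0) ≤
      (if i ∈ X p then p i - c i else 0)) ∧
    v (X p) - ∑ i ∈ X p, c i = (ℓ : ℝ) ^ 2 ∧
    (∀ S : Finset (Fin (ℓ + k + 1)), v S - ∑ i ∈ S, c i ≤ (ℓ : ℝ) * k) ∧
    (∃ S : Finset (Fin (ℓ + k + 1)), v S - ∑ i ∈ S, c i = (ℓ : ℝ) * k) := by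
  have hklR : (ℓ:ℝ) < k := by exact_mod_cast hk
  have hl0 : (0:ℝ) ≤ ℓ := by positivity
  have hcardlt : (Finset.univ.filter fun j : Fin (ℓ+k+1) => (j:ℕ) < ℓ).card = ℓ :=
    fincard_lt _ _ (by omega)
  have hfilter_le_eq : (Finset.univ.filter fun j : Fin (ℓ+k+1) => (j:ℕ) ≤ ℓ)
      = (Finset.univ.filter fun j : Fin (ℓ+k+1) => (j:ℕ) < ℓ+1) := by
    apply Finset.filter_congr; intro j _; simp [Nat.lt_succ_iff]
  have hcardle : (Finset.univ.filter fun j : Fin (ℓ+k+1) => (j:ℕ) ≤ ℓ).card = ℓ + 1 := by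
    rw [hfilter_le_eq]; exact fincard_lt _ _ (by omega)
  -- generic sum computations
  have hsumw : ∀ T : Finset (Fin (ℓ+k+1)), ∑ i ∈ T, w i =
      (T.filter fun i : Fin (ℓ+k+1) => (i:ℕ) ≤ ℓ).card * k +
      (T.filter fun i : Fin (ℓ+k+1) => ¬ (i:ℕ) ≤ ℓ).card * ℓ := by
    intro T
    rw [Finset.sum_congr rfl fun i _ => hw i]
    exact sum_ite_split T ℓ _ _
  have hsump : ∀ T : Finset (Fin (ℓ+k+1)), ∑ i ∈ T, p i =
      (T.filter fun i : Fin (ℓ+k+1) => (i:ℕ) ≤ ℓ).card * ((k:ℝ) - ℓ) +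
      (T.filter fun i : Fin (ℓ+k+1) => ¬ (i:ℕ) ≤ ℓ).card * ℓ := by
    intro T
    rw [Finset.sum_congr rfl fun i _ => hprice i]
    exact sum_ite_split T ℓ _ _
  have hsumc : ∀ T : Finset (Fin (ℓ+k+1)), ∑ i ∈ T, c i =
      (T.filter fun i : Fin (ℓ+k+1) => (i:ℕ) ≤ ℓ).card * ((k:ℝ) - ℓ) := by
    intro T
    rw [Finset.sum_congr rfl fun i _ => hcost i]
    rw [sum_ite_split T ℓ _ _]; ring
  set L0 : Finset (Fin (ℓ+k+1)) :=
    Finset.univ.filter (fun i : Fin (ℓ+k+1) => (i:ℕ) < ℓ) with hL0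
  have hL0f1 : (L0.filter fun i : Fin (ℓ+k+1) => (i:ℕ) ≤ ℓ) = L0 := by
    apply Finset.filter_eq_self.mpr
    intro j hj
    have := (Finset.mem_filter.mp hj).2
    omega
  have hL0f2 : (L0.filter fun i : Fin (ℓ+k+1) => ¬ (i:ℕ) ≤ ℓ) = ∅ := by
    apply Finset.filter_eq_empty_iff.mpr
    intro j hj
    have := (Finset.mem_filter.mp hj).2
    omega
  -- welfare at X p
  have hwelf : v (X p) - ∑ i ∈ X p, c i = (ℓ:ℝ)^2 := by
    rw [hXp, hv, hsumw, hsumc, hL0f1, hL0f2, hcardlt]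
    simp only [Finset.card_empty, Nat.cast_zero, zero_mul, add_zero]
    rw [min_eq_left (le_of_eq (mul_comm _ _))]
    ring
  refine ⟨?_, hwelf, ?_, ?_⟩
  · -- Nash equilibrium
    intro i q hq
    have hRHS : (if i ∈ X p then p i - c i else 0) = 0 := by
      split
      · next h =>
        rw [hXp] at h
        have hi : (i:ℕ) ≤ ℓ := le_of_lt (Finset.mem_filter.mp h).2
        rw [hprice, hcost, if_pos hi, if_pos hi]; ring
      · rfl
    rw [hRHS]
    set q' := Function.update p i q with hq'
    by_cases hmem : i ∈ X q'
    swap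
    · rw [if_neg hmem]
    rw [if_pos hmem]
    have hq'pos : ∀ j, 0 ≤ q' j := by
      intro j
      rcases eq_or_ne j i with rfl | hji
      · simpa [hq'] using hq
      · rw [hq', Function.update_of_ne hji, hprice]
        split <;> [linarith; positivity]
    set T := X q' with hT
    set m := (T.filter fun i : Fin (ℓ+k+1) => (i:ℕ) ≤ ℓ).card with hm
    set t := (T.filter fun i : Fin (ℓ+k+1) => ¬ (i:ℕ) ≤ ℓ).card with ht
    have hsumq' : ∑ j ∈ T, q' j = q + (∑ j ∈ T, p j - p i) := by
      rw [hq', Finset.sum_update_of_mem hmem, Finset.sdiff_singleton_eq_erase,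
        Finset.sum_erase_eq_sub hmem]
    have hvT : v T = min ((k:ℝ)*ℓ) (m*k + t*ℓ) := by rw [hv, hsumw]
    by_cases hi : (i:ℕ) ≤ ℓ
    · -- heavy seller
      rw [hcost, if_pos hi]
      by_contra hcon
      push_neg at hcon
      have hqgt : (k:ℝ) - ℓ < q := by linarith
      -- alternative set: ℓ heavy sellers other than i
      set T0 := (Finset.univ.filter fun j : Fin (ℓ+k+1) => (j:ℕ) ≤ ℓ).erase i with hT0
      have hiH : i ∈ Finset.univ.filter fun j : Fin (ℓ+k+1) => (j:ℕ) ≤ ℓ :=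
        Finset.mem_filter.mpr ⟨Finset.mem_univ _, hi⟩
      have hcardT0 : T0.card = ℓ := by
        rw [hT0, Finset.card_erase_of_mem hiH, hcardle]
        omega
      have hheavyT0 : ∀ j ∈ T0, (j:ℕ) ≤ ℓ := fun j hj =>
        (Finset.mem_filter.mp (Finset.mem_of_mem_erase hj)).2
      have hiT0 : i ∉ T0 := Finset.notMem_erase i _
      have hsumq'T0 : ∑ j ∈ T0, q' j = ℓ * ((k:ℝ) - ℓ) := by
        rw [Finset.sum_congr rfl fun j hj =>
          Function.update_of_ne (by rintro rfl; exact hiT0 hj) q p]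
        rw [Finset.sum_congr rfl fun j hj => by
          rw [hprice, if_pos (hheavyT0 j hj)]]
        rw [Finset.sum_const, hcardT0, nsmul_eq_mul]
      have hsumwT0 : ∑ j ∈ T0, w j = (ℓ:ℝ) * k := by
        rw [Finset.sum_congr rfl fun j hj => by
          rw [hw, if_pos (hheavyT0 j hj)]]
        rw [Finset.sum_const, hcardT0, nsmul_eq_mul]
      have hvT0 : v T0 = (k:ℝ) * ℓ := by
        rw [hv, hsumwT0, min_eq_left (le_of_eq (mul_comm _ _))]
      have hd := hXd q' hq'pos T0
      rw [hvT0, hsumq'T0, ← hT, hvT, hsumq', hsump, ← hm, ← ht, hprice, if_pos hi] at hd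
      have hcore := core1 ℓ k m t hk
      nlinarith
    · -- light seller
      rw [hcost, if_neg hi, sub_zero]
      by_contra hcon
      push_neg at hcon
      have ht1 : 1 ≤ t := by
        rw [ht]
        exact Finset.card_pos.mpr ⟨i, Finset.mem_filter.mpr ⟨hmem, hi⟩⟩
      have hiL0 : i ∉ L0 := by
        rw [hL0]
        intro h
        exact hi (le_of_lt (Finset.mem_filter.mp h).2)
      have hlightL0 : ∀ j ∈ L0, (j:ℕ) ≤ ℓ := fun j hj =>
        le_of_lt (Finset.mem_filter.mp hj).2
      have hsumq'L0 : ∑ j ∈ L0, q' j = ℓ * ((k:ℝ) - ℓ) := by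
        rw [Finset.sum_congr rfl fun j hj =>
          Function.update_of_ne (by rintro rfl; exact hiL0 hj) q p]
        rw [Finset.sum_congr rfl fun j hj => by
          rw [hprice, if_pos (hlightL0 j hj)]]
        rw [Finset.sum_const, hcardlt, nsmul_eq_mul]
      have hsumwL0 : ∑ j ∈ L0, w j = (ℓ:ℝ) * k := by
        rw [Finset.sum_congr rfl fun j hj => by
          rw [hw, if_pos (hlightL0 j hj)]]
        rw [Finset.sum_const, hcardlt, nsmul_eq_mul]
      have hvL0 : v L0 = (k:ℝ) * ℓ := by
        rw [hv, hsumwL0, min_eq_left (le_of_eq (mul_comm _ _))]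
      have hd := hXd q' hq'pos L0
      rw [hvL0, hsumq'L0, ← hT, hvT, hsumq', hsump, ← hm, ← ht, hprice, if_neg hi] at hd
      have hcore := core2 ℓ k m t hk ht1
      nlinarith
  · -- welfare upper bound
    intro S
    rw [hv]
    have h1 : min ((k:ℝ)*ℓ) (∑ i ∈ S, w i) ≤ (k:ℝ)*ℓ := min_le_left _ _
    have h2 : (0:ℝ) ≤ ∑ i ∈ S, c i := by
      apply Finset.sum_nonneg
      intro j _
      rw [hcost]
      split <;> linarith
    have h3 : (ℓ:ℝ) * k = k * ℓ := mul_comm _ _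
    linarith
  · -- optimal set: all light sellers
    refine ⟨Finset.univ.filter fun j : Fin (ℓ+k+1) => ¬ (j:ℕ) ≤ ℓ, ?_⟩
    set S := Finset.univ.filter fun j : Fin (ℓ+k+1) => ¬ (j:ℕ) ≤ ℓ with hS
    have hcardS : S.card = k := by
      have := Finset.card_filter_add_card_filter_not
        (s := (Finset.univ : Finset (Fin (ℓ+k+1))))
        (p := fun j : Fin (ℓ+k+1) => (j:ℕ) ≤ ℓ)
      rw [hcardle, Finset.card_univ, Fintype.card_fin, ← hS] at this
      omega
    have hlightS : ∀ j ∈ S, ¬ (j:ℕ) ≤ ℓ := fun j hj => (Finset.mem_filter.mp hj).2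
    have hsumwS : ∑ j ∈ S, w j = (k:ℝ) * ℓ := by
      rw [Finset.sum_congr rfl fun j hj => by
        rw [hw, if_neg (hlightS j hj)]]
      rw [Finset.sum_const, hcardS, nsmul_eq_mul]
    have hsumcS : ∑ j ∈ S, c j = 0 := by
      apply Finset.sum_eq_zero
      intro j hj
      rw [hcost, if_neg (hlightS j hj)]
    rw [hv, hsumwS, hsumcS, min_self, mul_comm, sub_zero]
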